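/- Let n be a positive integer and j a real number such that 2j is an integer with 2j ≥ 2, n − 2j is a positive even integer (so 1 ≤ j ≤ n/2 − 1). Then T_*(j) ≥ 2n − 4j + (2j − 2)·ln(n/2 − j) − (2j + 4)·ln((n/2 + j + 1)/(2j + 1)). -/

import Mathlib

/-- The probability `e_{j'}(j)` that a random SWAP test on `2j'` qubits in the
angular-momentum-`j` sector detects a singlet. -/
noncomputable def eprob (j' j : ℝ) : ℝ :=
  (j' * (j' + 1) - j * (j + 1)) / (2 * j' * (2 * j' - 1))

/-- **Lower bound on the mean number of SWAP tests.** If `n` is a positive integer and `j`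
a real number with `2j` an integer, `2j ≥ 2`, and `n - 2j = 2k` a positive even integer,
then `T_*(j) = ∑_{j'=j+1}^{n/2} 1/e_{j'}(j)
  ≥ 2n - 4j + (2j - 2)·ln(n/2 - j) - (2j + 4)·ln((n/2 + j + 1)/(2j + 1))`. -/

lemma term_bound (j c : ℝ) (hj : 2 ≤ 2 * j) (hc : 1 ≤ c) :
    4 + (2 * j - 2) * (Real.log (c + 1) - Real.log c)
      - (2 * j + 4) * (Real.log (2 * j + c + 1) - Real.log (2 * j + c))
      ≤ 1 / eprob (j + c) j := by
  have hc0 : (0:ℝ) < c := by linarith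
  have hj1 : (1:ℝ) ≤ j := by linarith
  have hd : (0:ℝ) < c * (2 * j + c + 1) := by nlinarith
  have heq : 1 / eprob (j + c) j = (2 * j + 2 * c) * (2 * j + 2 * c - 1) / (c * (2 * j + c + 1)) := by
    unfold eprob
    rw [one_div_div]
    have h1 : (j + c) * ((j + c) + 1) - j * (j + 1) = c * (2 * j + c + 1) := by ring
    rw [h1]
    congr 1
    ring
  have hlog1 : Real.log (c + 1) - Real.log c ≤ 1 / c := by
    rw [← Real.log_div (by linarith) (by linarith)]
    have h := Real.log_le_sub_one_of_pos (show (0:ℝ) < (c + 1) / c by positivity)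
    have h2 : (c + 1) / c - 1 = 1 / c := by field_simp; ring
    linarith
  have hlog2 : 1 / (2 * j + c + 1) ≤ Real.log (2 * j + c + 1) - Real.log (2 * j + c) := by
    have h := Real.log_le_sub_one_of_pos
      (show (0:ℝ) < (2 * j + c) / (2 * j + c + 1) by positivity)
    rw [Real.log_div (by linarith) (by linarith)] at h
    have h2 : (2 * j + c) / (2 * j + c + 1) - 1 = -(1 / (2 * j + c + 1)) := by field_simp; ring
    linarith
  have hmid : 4 + (2 * j - 2) * (1 / c) - (2 * j + 4) * (1 / (2 * j + c + 1))
      = ((2 * j + 2 * c) * (2 * j + 2 * c - 1) - 2) / (c * (2 * j + c + 1)) := by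
    field_simp
    ring
  have hstep : 4 + (2 * j - 2) * (1 / c) - (2 * j + 4) * (1 / (2 * j + c + 1))
      ≤ 1 / eprob (j + c) j := by
    rw [heq, hmid]
    gcongr
    linarith
  have ha : (0:ℝ) ≤ 2 * j - 2 := by linarith
  have hb : (0:ℝ) ≤ 2 * j + 4 := by linarith
  nlinarith [mul_le_mul_of_nonneg_left hlog1 ha, mul_le_mul_of_nonneg_left hlog2 hb]

theorem mean_swap_tests_lower_bound
    (n : ℕ) (hn : 0 < n) (j : ℝ) (h2j : ∃ m : ℕ, (m : ℝ) = 2 * j) (hj : 2 ≤ 2 * j)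
    (k : ℕ) (hk : 0 < k) (hkj : (n : ℝ) - 2 * j = 2 * k) :
    2 * (n : ℝ) - 4 * j + (2 * j - 2) * Real.log ((n : ℝ) / 2 - j)
        - (2 * j + 4) * Real.log (((n : ℝ) / 2 + j + 1) / (2 * j + 1)) ≤
      ∑ r ∈ Finset.range k, 1 / eprob (j + (r + 1)) j := by
  have hk1 : (1:ℝ) ≤ (k:ℝ) := by exact_mod_cast hk
  have hj1 : (1:ℝ) ≤ j := by linarith
  -- sum lower bound
  have hsum : ∑ r ∈ Finset.range k,
      (4 + (2 * j - 2) * (Real.log ((r:ℝ) + 1 + 1) - Real.log ((r:ℝ) + 1))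
        - (2 * j + 4) * (Real.log (2 * j + ((r:ℝ) + 1) + 1) - Real.log (2 * j + ((r:ℝ) + 1))))
      ≤ ∑ r ∈ Finset.range k, 1 / eprob (j + (r + 1)) j := by
    apply Finset.sum_le_sum
    intro r _
    have := term_bound j ((r:ℝ) + 1) hj (by linarith [Nat.cast_nonneg (α := ℝ) r])
    convert this using 3 <;> push_cast <;> ring
  -- telescoping sums
  have t1 : ∑ r ∈ Finset.range k,
      (Real.log ((r:ℝ) + 1 + 1) - Real.log ((r:ℝ) + 1)) = Real.log ((k:ℝ) + 1) := by
    have := Finset.sum_range_sub (fun i : ℕ => Real.log ((i:ℝ) + 1)) k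
    simp only [Nat.cast_zero, zero_add, Real.log_one, sub_zero] at this
    rw [← this]
    apply Finset.sum_congr rfl
    intro r _
    push_cast
    ring_nf
  have t2 : ∑ r ∈ Finset.range k,
      (Real.log (2 * j + ((r:ℝ) + 1) + 1) - Real.log (2 * j + ((r:ℝ) + 1)))
      = Real.log (2 * j + (k:ℝ) + 1) - Real.log (2 * j + 1) := by
    have := Finset.sum_range_sub (fun i : ℕ => Real.log (2 * j + (i:ℝ) + 1)) k
    simp only [Nat.cast_zero, add_zero] at this
    rw [← this]
    apply Finset.sum_congr rfl
    intro r _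
    push_cast
    ring_nf
  have hsum2 : ∑ r ∈ Finset.range k,
      (4 + (2 * j - 2) * (Real.log ((r:ℝ) + 1 + 1) - Real.log ((r:ℝ) + 1))
        - (2 * j + 4) * (Real.log (2 * j + ((r:ℝ) + 1) + 1) - Real.log (2 * j + ((r:ℝ) + 1))))
      = 4 * (k:ℝ) + (2 * j - 2) * Real.log ((k:ℝ) + 1)
        - (2 * j + 4) * (Real.log (2 * j + (k:ℝ) + 1) - Real.log (2 * j + 1)) := by
    rw [Finset.sum_sub_distrib, Finset.sum_add_distrib, ← Finset.mul_sum, ← Finset.mul_sum,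
      t1, t2, Finset.sum_const, Finset.card_range]
    push_cast
    ring
  -- identify the statement quantities
  have hnk : (n:ℝ) = 2 * j + 2 * (k:ℝ) := by linarith
  have e1 : (n:ℝ) / 2 - j = (k:ℝ) := by rw [hnk]; ring
  have e2 : ((n:ℝ) / 2 + j + 1) / (2 * j + 1) = (2 * j + (k:ℝ) + 1) / (2 * j + 1) := by
    rw [hnk]; ring_nf
  rw [e1, e2, Real.log_div (by linarith) (by linarith)]
  have hlogk : Real.log (k:ℝ) ≤ Real.log ((k:ℝ) + 1) :=
    Real.log_le_log (by linarith) (by linarith)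
  have ha : (0:ℝ) ≤ 2 * j - 2 := by linarith
  calc 2 * (n:ℝ) - 4 * j + (2 * j - 2) * Real.log (k:ℝ)
        - (2 * j + 4) * (Real.log (2 * j + (k:ℝ) + 1) - Real.log (2 * j + 1))
      ≤ 4 * (k:ℝ) + (2 * j - 2) * Real.log ((k:ℝ) + 1)
        - (2 * j + 4) * (Real.log (2 * j + (k:ℝ) + 1) - Real.log (2 * j + 1)) := by
        nlinarith [mul_le_mul_of_nonneg_left hlogk ha]
    _ = _ := hsum2.symm
    _ ≤ _ := hsum
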